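/- Let U : S(ℝⁿ) → S(ℝⁿ) be a bijection satisfying, for all f, g ∈ S(ℝⁿ): (1) U(f + ḡ) = U(f) + conj(U(g)), (2) U(f·g) = U(f)·U(g), (3) U(f ∗ g) = U(f) ∗ U(g), and let m : ℂ → ℂ satisfy U(c·f) = m(c) · Uf for all c ∈ ℂ and f ∈ S(ℝⁿ). Then m is injective, m(ab) = m(a)m(b) for all a, b ∈ ℂ, m(a + b̄) = m(a) + conj(m(b)) for all a, b ∈ ℂ, and in particular m(ā) = conj(m(a)) for all a ∈ ℂ. -/

import Mathlib

open MeasureTheory SchwartzMap Complex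
open scoped ContDiff
set_option maxHeartbeats 1000000

noncomputable def myBump (n : ℕ) : ContDiffBump (0 : EuclideanSpace ℝ (Fin n)) :=
  ⟨1, 2, one_pos, one_lt_two⟩

lemma myBump_smooth (n : ℕ) :
    ContDiff ℝ ∞ (fun x : EuclideanSpace ℝ (Fin n) => ((myBump n x : ℝ) : ℂ)) :=
  Complex.ofRealCLM.contDiff.comp (myBump n).contDiff

lemma myBump_cs (n : ℕ) :
    HasCompactSupport (fun x : EuclideanSpace ℝ (Fin n) => ((myBump n x : ℝ) : ℂ)) := by
  have : (fun x : EuclideanSpace ℝ (Fin n) => ((myBump n x : ℝ) : ℂ)) =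
      (fun r : ℝ => (r : ℂ)) ∘ (myBump n) := rfl
  rw [this]
  exact (myBump n).hasCompactSupport.comp_left (by simp)

noncomputable def myF (n : ℕ) : SchwartzMap (EuclideanSpace ℝ (Fin n)) ℂ where
  toFun := fun x => ((myBump n x : ℝ) : ℂ)
  smooth' := myBump_smooth n
  decay' := by
    intro k N
    have h1 : HasCompactSupport
        (fun x : EuclideanSpace ℝ (Fin n) =>
          ‖x‖ ^ k * ‖iteratedFDeriv ℝ N (fun x => ((myBump n x : ℝ) : ℂ)) x‖) := by
      have h2 := HasCompactSupport.iteratedFDeriv (𝕜 := ℝ) (myBump_cs n) N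
      have h2' : HasCompactSupport (fun x : EuclideanSpace ℝ (Fin n) =>
          ‖iteratedFDeriv ℝ N (fun x => ((myBump n x : ℝ) : ℂ)) x‖) :=
        h2.norm
      have heq : (fun x : EuclideanSpace ℝ (Fin n) =>
          ‖x‖ ^ k * ‖iteratedFDeriv ℝ N (fun x => ((myBump n x : ℝ) : ℂ)) x‖) =
          (fun x : EuclideanSpace ℝ (Fin n) => ‖x‖ ^ k) *
          (fun x : EuclideanSpace ℝ (Fin n) =>
            ‖iteratedFDeriv ℝ N (fun x => ((myBump n x : ℝ) : ℂ)) x‖) := rfl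
      rw [heq]
      exact h2'.mul_left
    have hcont : Continuous
        (fun x : EuclideanSpace ℝ (Fin n) =>
          ‖x‖ ^ k * ‖iteratedFDeriv ℝ N (fun x => ((myBump n x : ℝ) : ℂ)) x‖) :=
      (continuous_norm.pow k).mul
        (((myBump_smooth n).continuous_iteratedFDeriv (mod_cast le_top)).norm)
    obtain ⟨C, hC⟩ := hcont.bounded_above_of_compact_support h1
    refine ⟨C, fun x => ?_⟩
    have := hC x
    rwa [Real.norm_eq_abs, _root_.abs_of_nonneg (by positivity)] at this


theorem stmt_11 (n : ℕ)
    (U : SchwartzMap (EuclideanSpace ℝ (Fin n)) ℂ → SchwartzMap (EuclideanSpace ℝ (Fin n)) ℂ)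
    (hUbij : Function.Bijective U)
    (h1 : ∀ f g h : SchwartzMap (EuclideanSpace ℝ (Fin n)) ℂ,
      (∀ x, h x = f x + starRingEnd ℂ (g x)) →
      ∀ x, U h x = U f x + starRingEnd ℂ (U g x))
    (h2 : ∀ f g h : SchwartzMap (EuclideanSpace ℝ (Fin n)) ℂ,
      (∀ x, h x = f x * g x) → ∀ x, U h x = U f x * U g x)
    (h3 : ∀ f g h : SchwartzMap (EuclideanSpace ℝ (Fin n)) ℂ,
      (∀ x, h x = ∫ y, f (x - y) * g y) →
      ∀ x, U h x = ∫ y, U f (x - y) * U g y)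
    (m : ℂ → ℂ)
    (hm : ∀ (c : ℂ) (f : SchwartzMap (EuclideanSpace ℝ (Fin n)) ℂ)
      (x : EuclideanSpace ℝ (Fin n)), U (c • f) x = m c * U f x) :
    Function.Injective m ∧
    (∀ a b : ℂ, m (a * b) = m a * m b) ∧
    (∀ a b : ℂ, m (a + starRingEnd ℂ b) = m a + starRingEnd ℂ (m b)) ∧
    (∀ a : ℂ, m (starRingEnd ℂ a) = starRingEnd ℂ (m a)) := by
  set f₀ := myF n with hf₀def
  have hreal : ∀ x, starRingEnd ℂ (f₀ x) = f₀ x := fun x =>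
    Complex.conj_ofReal _
  have hf00 : f₀ 0 = 1 := by
    have h : (myBump n) (0 : EuclideanSpace ℝ (Fin n)) = 1 :=
      (myBump n).one_of_mem_closedBall (by simp [myBump])
    show (((myBump n) (0 : EuclideanSpace ℝ (Fin n)) : ℝ) : ℂ) = 1
    rw [h]; norm_num
  -- U 0 = 0
  have hU0 : U (0 : SchwartzMap (EuclideanSpace ℝ (Fin n)) ℂ) = 0 := by
    ext x
    have h := h1 0 0 0 (fun x => by simp) x
    have hc : starRingEnd ℂ (U 0 x) = 0 := left_eq_add.mp h
    have := congrArg (starRingEnd ℂ) hc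
    simpa using this
  -- a point where U f₀ is nonzero
  have hf0ne : f₀ ≠ 0 := by
    intro h
    rw [h] at hf00
    simp at hf00
  have hUf0ne : U f₀ ≠ 0 := by
    intro h
    exact hf0ne (hUbij.injective (h.trans hU0.symm))
  obtain ⟨x₀, hx₀⟩ : ∃ x, U f₀ x ≠ 0 := by
    by_contra h
    push_neg at h
    exact hUf0ne (SchwartzMap.ext h)
  -- m 0 = 0 and m 1 = 1
  have hm0 : m 0 = 0 := by
    have := hm 0 f₀ x₀
    rw [zero_smul, hU0] at this
    have h0 : (0 : ℂ) = m 0 * U f₀ x₀ := this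
    replace h0 := mul_eq_zero.mp h0.symm
    rcases h0 with h | h
    · exact h
    · exact absurd h hx₀
  have hm1 : m 1 = 1 := by
    have := hm 1 f₀ x₀
    rw [one_smul] at this
    have h' : (m 1 - 1) * U f₀ x₀ = 0 := by linear_combination -this
    exact sub_eq_zero.mp ((mul_eq_zero.mp h').resolve_right hx₀)
  -- key identity
  have star : ∀ (a b : ℂ) (x : EuclideanSpace ℝ (Fin n)),
      m (a + starRingEnd ℂ b) * U f₀ x =
        m a * U f₀ x + starRingEnd ℂ (m b * U f₀ x) := by
    intro a b x
    have hkey := h1 (a • f₀) (b • f₀) ((a + starRingEnd ℂ b) • f₀)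
      (fun x => by
        simp only [SchwartzMap.smul_apply, smul_eq_mul, map_mul, hreal x]
        ring) x
    rw [hm, hm, hm] at hkey
    exact hkey
  -- U f₀ is real-valued
  have hφreal : ∀ x, starRingEnd ℂ (U f₀ x) = U f₀ x := by
    intro x
    have := star 0 1 x
    simp [hm0, hm1] at this
    exact this.symm
  -- additivity
  have hadd : ∀ a b : ℂ, m (a + starRingEnd ℂ b) = m a + starRingEnd ℂ (m b) := by
    intro a b
    have h := star a b x₀
    rw [map_mul, hφreal x₀] at h
    have h' : (m (a + starRingEnd ℂ b) - (m a + starRingEnd ℂ (m b))) * U f₀ x₀ = 0 := by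
      linear_combination h
    exact sub_eq_zero.mp ((mul_eq_zero.mp h').resolve_right hx₀)
  -- conjugation
  have hconj : ∀ a : ℂ, m (starRingEnd ℂ a) = starRingEnd ℂ (m a) := by
    intro a
    have := hadd 0 a
    rwa [zero_add, hm0, zero_add] at this
  -- multiplicativity
  have hmul : ∀ a b : ℂ, m (a * b) = m a * m b := by
    intro a b
    have e1 : (a * b) • f₀ = a • (b • f₀) := (smul_smul a b f₀).symm
    have h := hm (a * b) f₀ x₀
    rw [e1, hm a (b • f₀) x₀, hm b f₀ x₀] at h
    have h' : (m (a * b) - m a * m b) * U f₀ x₀ = 0 := by linear_combination -h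
    exact sub_eq_zero.mp ((mul_eq_zero.mp h').resolve_right hx₀)
  -- injectivity
  have hinj : Function.Injective m := by
    intro a b hab
    have : ∀ x, U (a • f₀) x = U (b • f₀) x := fun x => by rw [hm, hm, hab]
    have := hUbij.injective (SchwartzMap.ext this)
    have h0 := congrFun (congrArg (fun f : SchwartzMap (EuclideanSpace ℝ (Fin n)) ℂ => ⇑f) this) 0
    simp only [SchwartzMap.smul_apply, hf00, smul_eq_mul, mul_one] at h0
    exact h0
  exact ⟨hinj, hmul, hadd, hconj⟩
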